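/- Let n ≥ 1 and t ≥ 1, and let v_1, …, v_t, w ∈ ℤ^n satisfy: ⟨v_i, v_i⟩ = 2 for all i; ⟨v_i, v_{i+1}⟩ = −1 for all 1 ≤ i ≤ t−1; ⟨v_i, v_j⟩ = 0 whenever |i − j| ≥ 2; ⟨w, v_t⟩ = −1; and ⟨w, v_i⟩ = 0 for all i < t. Then there exist pairwise distinct indices i_1, …, i_{t+1} ∈ {1, …, n} and signs ε_1, …, ε_{t+1} ∈ {−1, 1} such that v_j = ε_j e_{i_j} − ε_{j+1} e_{i_{j+1}} for every 1 ≤ j ≤ t. In particular, the union of the supports of v_1, …, v_t has exactly t + 1 elements. -/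

import Mathlib

namespace ChainRigid

variable {n : ℕ}

lemma dot_comm (f g : Fin n → ℤ) : ∑ m, f m * g m = ∑ m, g m * f m :=
  Finset.sum_congr rfl fun m _ => mul_comm _ _

lemma dot_single (p : Fin n) (a : ℤ) (u : Fin n → ℤ) :
    ∑ m, (Pi.single p a : Fin n → ℤ) m * u m = a * u p := by
  rw [Finset.sum_eq_single p]
  · rw [Pi.single_eq_same]
  · intro m _ hm; rw [Pi.single_eq_of_ne hm, zero_mul]
  · intro h; exact absurd (Finset.mem_univ p) h

lemma dot_pair (p q : Fin n) (a b : ℤ) (u : Fin n → ℤ) :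
    ∑ m, (Pi.single p a + Pi.single q b : Fin n → ℤ) m * u m = a * u p + b * u q := by
  simp only [Pi.add_apply, add_mul, Finset.sum_add_distrib, dot_single]

lemma pair_left {p q : Fin n} (h : p ≠ q) (a b : ℤ) :
    (Pi.single p a + Pi.single q b : Fin n → ℤ) p = a := by
  simp [Pi.single_eq_of_ne h]

lemma pair_right {p q : Fin n} (h : p ≠ q) (a b : ℤ) :
    (Pi.single p a + Pi.single q b : Fin n → ℤ) q = b := by
  simp [Pi.single_eq_of_ne h.symm]

lemma pair_ne {p q m : Fin n} (h1 : m ≠ p) (h2 : m ≠ q) (a b : ℤ) :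
    (Pi.single p a + Pi.single q b : Fin n → ℤ) m = 0 := by
  simp [Pi.single_eq_of_ne h1, Pi.single_eq_of_ne h2]

lemma sgn_ne_zero {a : ℤ} (h : a = 1 ∨ a = -1) : a ≠ 0 := by
  rcases h with rfl | rfl <;> norm_num

lemma sq_ne_two (z : ℤ) : z * z ≠ 2 := by
  intro h
  have h1 : z ≤ 1 := by nlinarith
  have h2 : -1 ≤ z := by nlinarith
  interval_cases z <;> omega

lemma norm_two {v : Fin n → ℤ} (h : ∑ m, v m * v m = 2) :
    ∃ p q a b, p ≠ q ∧ (a = 1 ∨ a = -1) ∧ (b = 1 ∨ b = -1) ∧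
      v = Pi.single p a + Pi.single q b := by
  classical
  set S := Finset.univ.filter (fun m => v m ≠ 0) with hSdef
  have hsum : ∑ m ∈ S, v m * v m = 2 := by
    rw [← h]
    apply Finset.sum_filter_of_ne
    intro m _ hm h0
    exact hm (by rw [h0, zero_mul])
  have hone : ∀ m ∈ S, 1 ≤ v m * v m := by
    intro m hm
    have hm0 : v m ≠ 0 := (Finset.mem_filter.mp hm).2
    rcases lt_or_gt_of_ne hm0 with h' | h' <;> nlinarith
  have hcard : S.card ≤ 2 := by
    by_contra hc
    push_neg at hc
    have := Finset.card_nsmul_le_sum S _ 1 hone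
    rw [nsmul_eq_mul, mul_one] at this
    rw [hsum] at this
    have : (S.card : ℤ) ≤ 2 := this
    omega
  interval_cases hC : S.card
  · rw [Finset.card_eq_zero] at hC
    rw [hC, Finset.sum_empty] at hsum
    norm_num at hsum
  · obtain ⟨p, hp⟩ := Finset.card_eq_one.mp hC
    rw [hp, Finset.sum_singleton] at hsum
    exact absurd hsum (sq_ne_two _)
  · obtain ⟨p, q, hpq, hS2⟩ := Finset.card_eq_two.mp hC
    have hsum2 : v p * v p + v q * v q = 2 := by
      rw [hS2, Finset.sum_pair hpq] at hsum; exact hsum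
    have hp1 : 1 ≤ v p * v p := hone p (by rw [hS2]; simp)
    have hq1 : 1 ≤ v q * v q := hone q (by rw [hS2]; simp)
    have hpe : v p * v p = 1 := by linarith
    have hqe : v q * v q = 1 := by linarith
    refine ⟨p, q, v p, v q, hpq, mul_self_eq_one_iff.mp hpe, mul_self_eq_one_iff.mp hqe, ?_⟩
    funext m
    by_cases hmp : m = p
    · subst hmp; rw [pair_left hpq]
    · by_cases hmq : m = q
      · subst hmq; rw [pair_right hpq]
      · rw [pair_ne hmp hmq]
        by_contra h0
        have : m ∈ S := Finset.mem_filter.mpr ⟨Finset.mem_univ _, h0⟩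
        rw [hS2] at this
        simp at this
        tauto

lemma extend_core (t : ℕ) (ht : 1 ≤ t) (v : ℕ → Fin n → ℤ) (w : Fin n → ℤ)
    (hvfar : ∀ i j, i < t + 1 → j < t + 1 → (i + 2 ≤ j ∨ j + 2 ≤ i) →
      ∑ m, v i m * v j m = 0)
    (hwlast : ∑ m, w m * v t m = -1)
    (hwother : ∀ i, i + 1 < t + 1 → ∑ m, w m * v i m = 0)
    (idx : ℕ → Fin n) (ε : ℕ → ℤ)
    (hinj : ∀ j, j < t + 1 → ∀ k, k < t + 1 → j ≠ k → idx j ≠ idx k)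
    (hsgn : ∀ j, j < t + 1 → ε j = 1 ∨ ε j = -1)
    (hrep : ∀ j, j < t →
      v j = Pi.single (idx j) (ε j) + Pi.single (idx (j+1)) (-(ε (j+1))))
    (p q : Fin n) (a b : ℤ) (hpq : p ≠ q) (ha : a = 1 ∨ a = -1) (hb : b = 1 ∨ b = -1)
    (hvt : v t = Pi.single p a + Pi.single q b)
    (hQ : v (t-1) q = 0) (hP : a * v (t-1) p = -1) :
    ∃ (idx' : ℕ → Fin n) (ε' : ℕ → ℤ),
      (∀ j, j < t + 2 → ∀ k, k < t + 2 → j ≠ k → idx' j ≠ idx' k) ∧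
      (∀ j, j < t + 2 → ε' j = 1 ∨ ε' j = -1) ∧
      (∀ j, j < t + 1 →
        v j = Pi.single (idx' j) (ε' j) + Pi.single (idx' (j+1)) (-(ε' (j+1)))) := by
  have hts : t - 1 + 1 = t := by omega
  have hrep1 : v (t-1) = Pi.single (idx (t-1)) (ε (t-1)) + Pi.single (idx t) (-(ε t)) := by
    have := hrep (t-1) (by omega); rwa [hts] at this
  have hne1 : idx (t-1) ≠ idx t := hinj _ (by omega) _ (by omega) (by omega)
  have hPne : v (t-1) p ≠ 0 := by
    intro h0; rw [h0, mul_zero] at hP; norm_num at hP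
  have hqne1 : q ≠ idx (t-1) := by
    intro h; rw [hrep1, h, pair_left hne1] at hQ
    exact sgn_ne_zero (hsgn (t-1) (by omega)) hQ
  have hqne2 : q ≠ idx t := by
    intro h; rw [hrep1, h, pair_right hne1] at hQ
    have := sgn_ne_zero (hsgn t (by omega)); omega
  have hp_mem : p = idx (t-1) ∨ p = idx t := by
    by_contra hc
    push_neg at hc
    exact hPne (by rw [hrep1]; exact pair_ne hc.1 hc.2 _ _)
  rcases hp_mem with hp | hp
  · -- BAD case : p = idx (t-1)
    have hvtp : v (t-1) p = ε (t-1) := by rw [hrep1, hp, pair_left hne1]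
    have hat : a = -(ε (t-1)) := by
      rcases ha with rfl | rfl <;> rcases hsgn (t-1) (by omega) with h1 | h1 <;>
        rw [hvtp, h1] at hP <;> omega
    by_cases ht1 : t = 1
    · -- reorient the single chain vector
      subst ht1
      have hrep0 : v 0 = Pi.single (idx 0) (ε 0) + Pi.single (idx 1) (-(ε 1)) :=
        hrep 0 (by omega)
      refine ⟨fun j => if j = 0 then idx 1 else if j = 1 then idx 0 else q,
        fun j => if j = 0 then -(ε 1) else if j = 1 then -(ε 0) else -b, ?_, ?_, ?_⟩
      · intro j hj k hk hjk
        have hq1 : q ≠ idx 0 := by rw [← hp]; exact hpq.symm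
        interval_cases j <;> interval_cases k <;> simp <;>
          first
            | exact hne1.symm | exact hne1 | exact hq1.symm | exact hq1
            | exact hqne2.symm | exact hqne2 | omega
      · intro j hj
        interval_cases j <;> simp <;>
          first
            | (rcases hsgn 1 (by omega) with h1 | h1 <;> omega)
            | (rcases hsgn 0 (by omega) with h1 | h1 <;> omega)
            | (rcases hb with rfl | rfl <;> norm_num)
      · intro j hj
        interval_cases j
        · rw [hrep0]
          norm_num [add_comm]
        · rw [hvt, hp, hat]
          norm_num
    · -- t ≥ 2 : contradiction
      exfalso
      have ht2 : 2 ≤ t := by omega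
      have hts2 : t - 2 + 1 = t - 1 := by omega
      have hrep2 : v (t-2) = Pi.single (idx (t-2)) (ε (t-2)) + Pi.single (idx (t-1)) (-(ε (t-1))) := by
        have := hrep (t-2) (by omega); rwa [hts2] at this
      have hne2 : idx (t-2) ≠ idx (t-1) := hinj _ (by omega) _ (by omega) (by omega)
      have hdot2 : a * v (t-2) p + b * v (t-2) q = 0 := by
        have h0 : ∑ m, v t m * v (t-2) m = 0 := by
          rw [dot_comm]; exact hvfar (t-2) t (by omega) (by omega) (Or.inl (by omega))
        rw [hvt, dot_pair] at h0; exact h0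
      have hv2p : v (t-2) p = -(ε (t-1)) := by rw [hrep2, hp, pair_right hne2]
      have h1 : a * v (t-2) p = 1 := by
        rw [hv2p, hat]; rcases hsgn (t-1) (by omega) with h | h <;> rw [h] <;> norm_num
      have hbq : b * v (t-2) q = -1 := by omega
      have hv2qne : v (t-2) q ≠ 0 := by
        intro h0; rw [h0, mul_zero] at hbq; norm_num at hbq
      have hq_mem : q = idx (t-2) := by
        by_contra hc
        exact hv2qne (by rw [hrep2]; exact pair_ne hc hqne1 _ _)
      have hv2q : v (t-2) q = ε (t-2) := by rw [hrep2, hq_mem, pair_left hne2]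
      have hbt : b = -(ε (t-2)) := by
        rcases hb with rfl | rfl <;> rcases hsgn (t-2) (by omega) with h | h <;>
          rw [hv2q, h] at hbq <;> omega
      by_cases ht3 : t = 2
      · -- use w : parity contradiction
        subst ht3
        have hw0 : ε 0 * w (idx 0) + (-(ε 1)) * w (idx 1) = 0 := by
          have h0 : ∑ m, v 0 m * w m = 0 := by
            rw [dot_comm]; exact hwother 0 (by omega)
          rw [hrep 0 (by omega), dot_pair] at h0; exact h0
        have hw2 : a * w p + b * w q = -1 := by
          have h0 : ∑ m, v 2 m * w m = -1 := by rw [dot_comm]; exact hwlast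
          rw [hvt, dot_pair] at h0; exact h0
        rw [hp, hq_mem, hat, hbt] at hw2
        -- hw2 : -(ε 1) * w (idx 1) + -(ε 0) * w (idx 0) = -1
        have h2 : (2:ℤ) * ((-(ε 1)) * w (idx 1)) = -1 := by
          have e1 : ε 0 * w (idx 0) = (-(ε 1)) * w (idx 1) * (-1) := by linarith
          norm_num at hw2 ⊢
          linarith
        have : (2:ℤ) ∣ -1 := ⟨(-(ε 1)) * w (idx 1), h2.symm⟩
        norm_num at this
      · -- t ≥ 3 : contradiction with v (t-3)
        have ht4 : 3 ≤ t := by omega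
        have hts3 : t - 3 + 1 = t - 2 := by omega
        have hrep3 : v (t-3) = Pi.single (idx (t-3)) (ε (t-3)) + Pi.single (idx (t-2)) (-(ε (t-2))) := by
          have := hrep (t-3) (by omega); rwa [hts3] at this
        have hdot3 : a * v (t-3) p + b * v (t-3) q = 0 := by
          have h0 : ∑ m, v t m * v (t-3) m = 0 := by
            rw [dot_comm]; exact hvfar (t-3) t (by omega) (by omega) (Or.inl (by omega))
          rw [hvt, dot_pair] at h0; exact h0
        have hv3p : v (t-3) p = 0 := by
          rw [hrep3, hp]
          exact pair_ne (hinj _ (by omega) _ (by omega) (by omega))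
            (hinj _ (by omega) _ (by omega) (by omega)) _ _
        have hv3q : v (t-3) q = -(ε (t-2)) := by
          rw [hrep3, hq_mem]
          exact pair_right (hinj _ (by omega) _ (by omega) (by omega)) _ _
        rw [hv3p, hv3q, hbt, mul_zero] at hdot3
        rcases hsgn (t-2) (by omega) with h | h <;> rw [h] at hdot3 <;> norm_num at hdot3
  · -- GOOD case : p = idx t
    have hvtp : v (t-1) p = -(ε t) := by rw [hrep1, hp, pair_right hne1]
    have hat : a = ε t := by
      rcases ha with rfl | rfl <;> rcases hsgn t (by omega) with h1 | h1 <;>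
        rw [hvtp, h1] at hP <;> omega
    have hfresh : ∀ k, k < t + 1 → q ≠ idx k := by
      intro k hk
      rcases Nat.lt_or_ge k (t-1) with hk' | hk'
      · -- k + 2 ≤ t
        have hdot : a * v k p + b * v k q = 0 := by
          have h0 : ∑ m, v t m * v k m = 0 := by
            rw [dot_comm]; exact hvfar k t (by omega) (by omega) (Or.inl (by omega))
          rw [hvt, dot_pair] at h0; exact h0
        have hkp : v k p = 0 := by
          rw [hrep k (by omega), hp]
          exact pair_ne (hinj _ (by omega) _ (by omega) (by omega))
            (hinj _ (by omega) _ (by omega) (by omega)) _ _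
        rw [hkp, mul_zero, zero_add] at hdot
        have hkq : v k q = 0 := by
          rcases mul_eq_zero.mp hdot with h | h
          · exact absurd h (sgn_ne_zero hb)
          · exact h
        intro heq
        rw [hrep k (by omega), heq,
          pair_left (hinj _ (by omega) _ (by omega) (by omega))] at hkq
        exact sgn_ne_zero (hsgn k (by omega)) hkq
      · have : k = t - 1 ∨ k = t := by omega
        rcases this with rfl | rfl
        · exact hqne1
        · exact hqne2
    refine ⟨fun j => if j = t + 1 then q else idx j,
      fun j => if j = t + 1 then -b else ε j, ?_, ?_, ?_⟩
    · intro j hj k hk hjk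
      by_cases hj1 : j = t + 1 <;> by_cases hk1 : k = t + 1
      · omega
      · simp only [if_pos hj1, if_neg hk1]
        exact hfresh k (by omega)
      · simp only [if_neg hj1, if_pos hk1]
        exact (hfresh j (by omega)).symm
      · simp only [if_neg hj1, if_neg hk1]
        exact hinj j (by omega) k (by omega) hjk
    · intro j hj
      by_cases hj1 : j = t + 1
      · simp only [if_pos hj1]
        rcases hb with rfl | rfl <;> norm_num
      · simp only [if_neg hj1]
        exact hsgn j (by omega)
    · intro j hj
      by_cases hjt : j = t
      · simp only [hjt, if_neg (by omega : ¬ t = t + 1), if_pos rfl, if_true]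
        rw [hvt, hp, hat, neg_neg]
      · have hj' : j < t := by omega
        simp only [if_neg (by omega : j ≠ t + 1), if_neg (by omega : j + 1 ≠ t + 1)]
        exact hrep j hj'



lemma chain_main (v : ℕ → Fin n → ℤ) :
    ∀ t, 1 ≤ t → ∀ w : Fin n → ℤ,
    (∀ i, i < t → ∑ m, v i m * v i m = 2) →
    (∀ i, i + 1 < t → ∑ m, v i m * v (i + 1) m = -1) →
    (∀ i j, i < t → j < t → (i + 2 ≤ j ∨ j + 2 ≤ i) → ∑ m, v i m * v j m = 0) →
    (∑ m, w m * v (t - 1) m = -1) →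
    (∀ i, i + 1 < t → ∑ m, w m * v i m = 0) →
    ∃ (idx : ℕ → Fin n) (ε : ℕ → ℤ),
      (∀ j, j < t + 1 → ∀ k, k < t + 1 → j ≠ k → idx j ≠ idx k) ∧
      (∀ j, j < t + 1 → ε j = 1 ∨ ε j = -1) ∧
      (∀ j, j < t →
        v j = Pi.single (idx j) (ε j) + Pi.single (idx (j+1)) (-(ε (j+1)))) := by
  intro t ht
  induction t, ht using Nat.le_induction with
  | base =>
    intro w hvnorm hvadj hvfar hwlast hwother
    obtain ⟨p, q, a, b, hpq, ha, hb, hv0⟩ := norm_two (hvnorm 0 (by omega))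
    refine ⟨fun j => if j = 0 then p else q, fun j => if j = 0 then a else -b, ?_, ?_, ?_⟩
    · intro j hj k hk hjk
      interval_cases j <;> interval_cases k <;> simp <;> first | exact hpq | exact hpq.symm | omega
    · intro j hj
      interval_cases j <;> simp <;>
        first | exact ha | (rcases hb with rfl | rfl <;> norm_num)
    · intro j hj
      interval_cases j
      rw [hv0]
      norm_num
  | succ t ht IH =>
    intro w hvnorm hvadj hvfar hwlast hwother
    have hts : t - 1 + 1 = t := by omega
    obtain ⟨idx, ε, hinj, hsgn, hrep⟩ := IH (v t)
      (fun i hi => hvnorm i (by omega))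
      (fun i hi => hvadj i (by omega))
      (fun i j hi hj h => hvfar i j (by omega) (by omega) h)
      (by
        have h0 := hvadj (t-1) (by omega)
        rw [hts] at h0
        rw [dot_comm]; exact h0)
      (fun i hi => by
        rw [dot_comm]; exact hvfar i t (by omega) (by omega) (Or.inl (by omega)))
    obtain ⟨p, q, a, b, hpq, ha, hb, hvt⟩ := norm_two (hvnorm t (by omega))
    have hrep1 : v (t-1) = Pi.single (idx (t-1)) (ε (t-1)) + Pi.single (idx t) (-(ε t)) := by
      have := hrep (t-1) (by omega); rwa [hts] at this
    have hne1 : idx (t-1) ≠ idx t := hinj _ (by omega) _ (by omega) (by omega)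
    have hval : ∀ x, v (t-1) x = 0 ∨ v (t-1) x = 1 ∨ v (t-1) x = -1 := by
      intro x
      rw [hrep1]
      by_cases h1 : x = idx (t-1)
      · subst h1
        rw [pair_left hne1]
        rcases hsgn (t-1) (by omega) with h | h <;> rw [h] <;> norm_num
      · by_cases h2 : x = idx t
        · subst h2
          rw [pair_right hne1]
          rcases hsgn t (by omega) with h | h <;> rw [h] <;> norm_num
        · rw [pair_ne h1 h2]; norm_num
    have hdot : a * v (t-1) p + b * v (t-1) q = -1 := by
      have h0 : ∑ m, v t m * v (t-1) m = -1 := by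
        have h1 := hvadj (t-1) (by omega)
        rw [hts] at h1
        rw [dot_comm]; exact h1
      rw [hvt, dot_pair] at h0; exact h0
    have hcase : (v (t-1) q = 0 ∧ a * v (t-1) p = -1) ∨
        (v (t-1) p = 0 ∧ b * v (t-1) q = -1) := by
      rcases hval p with hPv | hPv | hPv <;> rcases hval q with hQv | hQv | hQv <;>
        rcases ha with rfl | rfl <;> rcases hb with rfl | rfl <;>
        rw [hPv, hQv] at hdot <;> norm_num at hdot <;> simp [hPv, hQv] <;> omega
    have hwlast' : ∑ m, w m * v t m = -1 := by
      have := hwlast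
      rwa [show t + 1 - 1 = t from by omega] at this
    rcases hcase with ⟨hQ, hP⟩ | ⟨hQ, hP⟩
    · exact extend_core t ht v w hvfar hwlast' hwother idx ε hinj hsgn hrep
        p q a b hpq ha hb hvt hQ hP
    · exact extend_core t ht v w hvfar hwlast' hwother idx ε hinj hsgn hrep
        q p b a hpq.symm hb ha (by rw [hvt, add_comm]) hQ hP

lemma smul_single_one (p : Fin n) (a : ℤ) :
    a • (Pi.single p 1 : Fin n → ℤ) = Pi.single p a := by
  funext m
  by_cases h : m = p
  · subst h; simp
  · simp [Pi.single_eq_of_ne h]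

end ChainRigid

open ChainRigid in
/-- Proposition on lattice embedding facts, part (1): rigidity of a chain of
(−2)-vectors `v 0, …, v (t-1)` attached to a further vector `w` in `ℤ^n`. -/
theorem stmt_0 (n t : ℕ) (hn : 1 ≤ n) (ht : 1 ≤ t)
    (v : ℕ → Fin n → ℤ) (w : Fin n → ℤ)
    (hvnorm : ∀ i, i < t → ∑ m, v i m * v i m = 2)
    (hvadj : ∀ i, i + 1 < t → ∑ m, v i m * v (i + 1) m = -1)
    (hvfar : ∀ i j, i < t → j < t → (i + 2 ≤ j ∨ j + 2 ≤ i) →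
      ∑ m, v i m * v j m = 0)
    (hwlast : ∑ m, w m * v (t - 1) m = -1)
    (hwother : ∀ i, i + 1 < t → ∑ m, w m * v i m = 0) :
    (∃ (idx : ℕ → Fin n) (ε : ℕ → ℤ),
      (∀ j, j < t + 1 → ∀ k, k < t + 1 → j ≠ k → idx j ≠ idx k) ∧
      (∀ j, j < t + 1 → ε j = 1 ∨ ε j = -1) ∧
      (∀ j, j < t →
        v j = ε j • Pi.single (idx j) 1 - ε (j + 1) • Pi.single (idx (j + 1)) 1)) ∧
    (⋃ (j : ℕ) (_ : j < t), Function.support (v j)).ncard = t + 1 := by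
  obtain ⟨idx, ε, hinj, hsgn, hrep⟩ :=
    chain_main v t ht w hvnorm hvadj hvfar hwlast hwother
  constructor
  · refine ⟨idx, ε, hinj, hsgn, ?_⟩
    intro j hj
    rw [hrep j hj, smul_single_one, smul_single_one, sub_eq_add_neg, ← Pi.single_neg]
  · have hU : (⋃ (j : ℕ) (_ : j < t), Function.support (v j)) =
        ↑((Finset.range (t+1)).image idx) := by
      ext x
      simp only [Set.mem_iUnion, Function.mem_support, Finset.coe_image, Set.mem_image,
        Finset.mem_coe, Finset.mem_range]
      constructor
      · rintro ⟨j, hj, hx⟩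
        rw [hrep j hj] at hx
        by_cases h1 : x = idx j
        · exact ⟨j, by omega, h1.symm⟩
        · by_cases h2 : x = idx (j+1)
          · exact ⟨j+1, by omega, h2.symm⟩
          · exact absurd (pair_ne h1 h2 _ _) hx
      · rintro ⟨k, hk, rfl⟩
        by_cases hkt : k < t
        · refine ⟨k, hkt, ?_⟩
          rw [hrep k hkt, pair_left (hinj k (by omega) (k+1) (by omega) (by omega))]
          exact sgn_ne_zero (hsgn k (by omega))
        · have hk' : k = t := by omega
          refine ⟨t-1, by omega, ?_⟩
          rw [hk']
          have hts : t - 1 + 1 = t := by omega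
          have hrep1 := hrep (t-1) (by omega)
          rw [hts] at hrep1
          rw [hrep1, pair_right (hinj (t-1) (by omega) t (by omega) (by omega))]
          have := sgn_ne_zero (hsgn t (by omega))
          omega
    rw [hU, Set.ncard_coe_finset, Finset.card_image_of_injOn, Finset.card_range]
    intro j hj k hk hjk
    by_contra hne
    exact hinj j (by simpa using hj) k (by simpa using hk) hne hjk
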